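/- Let H and H′ be a-labeled hypergraphs with H ⇒_π H′, i.e. H′ is obtained from H by replacing one a-labeled edge by SG(aa) (a path of two a-labeled edges through a fresh node). Then H has a bad node or an undirected cycle if and only if H′ has a bad node or an undirected cycle; equivalently, H is good if and only if H′ is good. -/

import Mathlib

namespace HRGPaper

universe u

/-- A hypergraph over a `Finset ℕ`-typed alphabet `C` with typing function `tc`. -/
structure Hypergraph (C : Type u) (tc : C → Finset ℕ) : Type (max u 1) where
  V : Type
  E : Type
  finV : Finite V
  finE : Finite E
  lab : E → C
  att : (e : E) → (σ : ℕ) → σ ∈ tc (lab e) → V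
  extType : Finset ℕ
  ext : (σ : ℕ) → σ ∈ extType → V

variable {C : Type u} {tc : C → Finset ℕ}

/-- An isomorphism of hypergraphs. -/
structure HIso (H K : Hypergraph C tc) where
  vE : H.V ≃ K.V
  eE : H.E ≃ K.E
  lab_eq : ∀ e, K.lab (eE e) = H.lab e
  att_eq : ∀ (e : H.E) (σ : ℕ) (h : σ ∈ tc (H.lab e)) (h' : σ ∈ tc (K.lab (eE e))),
    K.att (eE e) σ h' = vE (H.att e σ h)
  extType_eq : K.extType = H.extType
  ext_eq : ∀ (σ : ℕ) (h : σ ∈ H.extType) (h' : σ ∈ K.extType),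
    K.ext σ h' = vE (H.ext σ h)

/-- Two hypergraphs are isomorphic. -/
def IsIso (H K : Hypergraph C tc) : Prop := Nonempty (HIso H K)

/-- The handle `c•` of a label `c`. -/
def handle (c : C) : Hypergraph C tc where
  V := {σ : ℕ // σ ∈ tc c}
  E := PUnit
  finV := inferInstance
  finE := inferInstance
  lab := fun _ => c
  att := fun _ σ h => ⟨σ, h⟩
  extType := tc c
  ext := fun σ h => ⟨σ, h⟩

/-- The gluing relation used for hyperedge replacement: the attachment node of `e`
with selector `σ` gets identified with the external node of `K` with selector `σ`. -/
def glueRel (H : Hypergraph C tc) (e : H.E) (K : Hypergraph C tc) :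
    (H.V ⊕ K.V) → (H.V ⊕ K.V) → Prop := fun x y =>
  ∃ (σ : ℕ) (h : σ ∈ tc (H.lab e)) (h' : σ ∈ K.extType),
    x = Sum.inl (H.att e σ h) ∧ y = Sum.inr (K.ext σ h')

/-- The replacement `H[e/K]` of the hyperedge `e` in `H` by the hypergraph `K`. -/
def replace (H : Hypergraph C tc) (e : H.E) (K : Hypergraph C tc) : Hypergraph C tc where
  V := Quot (glueRel H e K)
  E := {e' : H.E // e' ≠ e} ⊕ K.E
  finV := by haveI := H.finV; haveI := K.finV; infer_instance
  finE := by haveI := H.finE; haveI := K.finE; infer_instance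
  lab := Sum.elim (fun e' => H.lab e'.1) K.lab
  att := fun e' => Sum.rec (motive := fun e' => (σ : ℕ) →
      σ ∈ tc (Sum.elim (fun e'' : {e' : H.E // e' ≠ e} => H.lab e''.1) K.lab e') →
      Quot (glueRel H e K))
    (fun e₀ σ h => Quot.mk _ (Sum.inl (H.att e₀.1 σ h)))
    (fun eK σ h => Quot.mk _ (Sum.inr (K.att eK σ h))) e'
  extType := H.extType
  ext := fun σ h => Quot.mk _ (Sum.inl (H.ext σ h))

/-- A hyperedge replacement grammar over the typed alphabet `C`; `isNT` singles out the
nonterminal labels, the remaining labels being terminal. -/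
structure HRG (C : Type u) (tc : C → Finset ℕ) where
  isNT : C → Prop
  finC : Finite C
  P : Set (C × Hypergraph C tc)
  finP : P.Finite
  lhs_nt : ∀ p ∈ P, isNT p.1
  rhs_type : ∀ p ∈ P, p.2.extType = tc p.1
  S : C
  S_nt : isNT S

/-- One derivation step of an HRG: replace a hyperedge labeled by the left-hand side of a
production with the right-hand side of that production. -/
def Step (Γ : HRG C tc) (H H' : Hypergraph C tc) : Prop :=
  ∃ (e : H.E) (p : C × Hypergraph C tc), p ∈ Γ.P ∧ H.lab e = p.1 ∧ H' = replace H e p.2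

/-- The derivability relation `⇒*` of an HRG. -/
def Derives (Γ : HRG C tc) : Hypergraph C tc → Hypergraph C tc → Prop :=
  Relation.ReflTransGen (Step Γ)

/-- Derivability in exactly `k` steps. -/
inductive DerivesIn (Γ : HRG C tc) : ℕ → Hypergraph C tc → Hypergraph C tc → Prop
  | refl (H : Hypergraph C tc) : DerivesIn Γ 0 H H
  | tail {k H H' H''} : DerivesIn Γ k H H' → Step Γ H' H'' → DerivesIn Γ (k + 1) H H''

/-- The language of an HRG: all hypergraphs with terminal labels only that are isomorphic to a
hypergraph derivable from the handle of the start symbol (i.e. the language is considered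
up to isomorphism). -/
def Lang (Γ : HRG C tc) : Set (Hypergraph C tc) :=
  {H | (∀ e : H.E, ¬ Γ.isNT (H.lab e)) ∧ ∃ H', Derives Γ (handle Γ.S) H' ∧ IsIso H' H}

/-- The string graph of the word `w`. -/
def SG (w : List C) : Hypergraph C tc where
  V := Fin (w.length + 1)
  E := Fin w.length
  finV := inferInstance
  finE := inferInstance
  lab := fun i => w.get i
  att := fun i σ _ => if σ = 1 then i.castSucc else i.succ
  extType := {1, 2}
  ext := fun σ _ => if σ = 1 then 0 else Fin.last w.length

/-- An HRG is string-generating if every hypergraph of its language is a string graph. -/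
def IsStringGenerating (Γ : HRG C tc) : Prop :=
  ∀ H ∈ Lang Γ, ∃ w : List C, IsIso H (SG w)

/-- A hypergraph is repetition-free if its external map and all its attachment maps
are injective. -/
def RepFree (H : Hypergraph C tc) : Prop :=
  (∀ (σ₁ σ₂ : ℕ) (h₁ : σ₁ ∈ H.extType) (h₂ : σ₂ ∈ H.extType),
      H.ext σ₁ h₁ = H.ext σ₂ h₂ → σ₁ = σ₂) ∧
  (∀ (e : H.E) (σ₁ σ₂ : ℕ) (h₁ : σ₁ ∈ tc (H.lab e)) (h₂ : σ₂ ∈ tc (H.lab e)),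
      H.att e σ₁ h₁ = H.att e σ₂ h₂ → σ₁ = σ₂)

/-- An HRG is repetition-free if all right-hand sides of its productions are repetition-free. -/
def RepFreeGrammar (Γ : HRG C tc) : Prop := ∀ p ∈ Γ.P, RepFree p.2

/-- The size of a hypergraph: number of nodes plus number of hyperedges plus the total number
of attachment nodes of its hyperedges. -/
noncomputable def hgSize (D : Hypergraph C tc) : ℕ :=
  Nat.card D.V + Nat.card D.E + Nat.card ((e : D.E) × {σ : ℕ // σ ∈ tc (D.lab e)})

/-- The size of a production. -/
noncomputable def prodSize (p : C × Hypergraph C tc) : ℕ :=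
  (tc p.1).card + hgSize p.2

/-- The size of an HRG. -/
noncomputable def hrgSize (Γ : HRG C tc) : ℕ :=
  ∑ p ∈ Γ.finP.toFinset, prodSize p

/-- The hypergraph `F(X, f)`: nodes `[n] = {1,…,n}`, a single hyperedge labeled `X`
whose attachment node for selector `j` is `f j`, and all nodes external via `ext j = j`. -/
def Fgraph (X : C) (n : ℕ) (hX : tc X = Finset.Icc 1 n) (f : ℕ → ℕ)
    (hf : ∀ j ∈ Finset.Icc 1 n, f j ∈ Finset.Icc 1 n) : Hypergraph C tc where
  V := {j : ℕ // j ∈ Finset.Icc 1 n}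
  E := PUnit
  finV := inferInstanceAs (Finite ↥(Finset.Icc 1 n))
  finE := inferInstance
  lab := fun _ => X
  att := fun _ σ h => ⟨f σ, hf σ (hX ▸ h)⟩
  extType := Finset.Icc 1 n
  ext := fun σ h => ⟨σ, h⟩

/-- A node is external if it is in the range of the external map. -/
def IsExternal (H : Hypergraph C tc) (v : H.V) : Prop :=
  ∃ (σ : ℕ) (h : σ ∈ H.extType), H.ext σ h = v

/-- The in-degree of a node of an (`a`-labeled) hypergraph: the number of edges whose
attachment node with selector `2` is `v`. -/
noncomputable def inDeg {C : Type u} {tc : C → Finset ℕ} (H : Hypergraph C tc) (v : H.V) : ℕ :=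
  Nat.card {e : H.E // ∃ h : 2 ∈ tc (H.lab e), H.att e 2 h = v}

/-- The out-degree of a node of an (`a`-labeled) hypergraph: the number of edges whose
attachment node with selector `1` is `v`. -/
noncomputable def outDeg {C : Type u} {tc : C → Finset ℕ} (H : Hypergraph C tc) (v : H.V) : ℕ :=
  Nat.card {e : H.E // ∃ h : 1 ∈ tc (H.lab e), H.att e 1 h = v}

/-- A node is bad if it is not external and its in-degree or out-degree differs from `1`. -/
def BadNode {C : Type u} {tc : C → Finset ℕ} (H : Hypergraph C tc) (v : H.V) : Prop :=
  ¬ IsExternal H v ∧ (inDeg H v ≠ 1 ∨ outDeg H v ≠ 1)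

/-- `H` has an undirected cycle `v₁, e₁, …, v_l, e_l`: the `vᵢ` are distinct nodes, the `eᵢ`
are distinct edges, and the unordered pair of attachment nodes of `eᵢ` is `{vᵢ, vᵢ₊₁}`
(indices cyclically). -/
def HasUndirectedCycle {C : Type u} {tc : C → Finset ℕ} (H : Hypergraph C tc) : Prop :=
  ∃ (l : ℕ) (hl : 0 < l) (v : Fin l → H.V) (e : Fin l → H.E),
    Function.Injective v ∧ Function.Injective e ∧
    ∀ i : Fin l, ∃ (h₁ : 1 ∈ tc (H.lab (e i))) (h₂ : 2 ∈ tc (H.lab (e i))),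
      ({H.att (e i) 1 h₁, H.att (e i) 2 h₂} : Set H.V)
        = {v i, v ⟨(i.1 + 1) % l, Nat.mod_lt _ hl⟩}

/-- A hypergraph is bad if it has a bad node or an undirected cycle. -/
def Bad {C : Type u} {tc : C → Finset ℕ} (H : Hypergraph C tc) : Prop :=
  (∃ v : H.V, BadNode H v) ∨ HasUndirectedCycle H

/-- A hypergraph is good if it is not bad. -/
def Good {C : Type u} {tc : C → Finset ℕ} (H : Hypergraph C tc) : Prop := ¬ Bad H

section Stmt14Aux

lemma finmk {n a b : ℕ} (ha : a < n) (hb : b < n) (h : a = b) :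
    (⟨a, ha⟩ : Fin n) = ⟨b, hb⟩ := by subst h; rfl

lemma pair_image_iff {α β : Type*} {f : α → β} (hf : Function.Injective f)
    {x y u w : α} : ({f x, f y} : Set β) = {f u, f w} ↔ ({x, y} : Set α) = {u, w} := by
  constructor
  · intro h
    apply Set.image_injective.mpr hf
    rw [Set.image_pair, Set.image_pair]
    exact h
  · intro h
    rw [← Set.image_pair, ← Set.image_pair, h]

variable {C : Type u} {tc : C → Finset ℕ}

/-- Rotating a cycle gives a cycle. -/
lemma rotate_cycle (H₀ : Hypergraph C tc) {l : ℕ} (hl : 0 < l)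
    (v : Fin l → H₀.V) (ed : Fin l → H₀.E)
    (hv : Function.Injective v) (he : Function.Injective ed)
    (hc : ∀ i : Fin l, ∃ (h₁ : 1 ∈ tc (H₀.lab (ed i))) (h₂ : 2 ∈ tc (H₀.lab (ed i))),
      ({H₀.att (ed i) 1 h₁, H₀.att (ed i) 2 h₂} : Set H₀.V)
        = {v i, v ⟨(i.1 + 1) % l, Nat.mod_lt _ hl⟩}) (k : ℕ) :
    ∃ (v' : Fin l → H₀.V) (ed' : Fin l → H₀.E),
      Function.Injective v' ∧ Function.Injective ed' ∧
      (∀ i : Fin l, ∃ (h₁ : 1 ∈ tc (H₀.lab (ed' i))) (h₂ : 2 ∈ tc (H₀.lab (ed' i))),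
        ({H₀.att (ed' i) 1 h₁, H₀.att (ed' i) 2 h₂} : Set H₀.V)
          = {v' i, v' ⟨(i.1 + 1) % l, Nat.mod_lt _ hl⟩}) ∧
      ∀ j : Fin l, v' j = v ⟨(j.1 + k) % l, Nat.mod_lt _ hl⟩
        ∧ ed' j = ed ⟨(j.1 + k) % l, Nat.mod_lt _ hl⟩ := by
  set r : Fin l → Fin l := fun j => ⟨(j.1 + k) % l, Nat.mod_lt _ hl⟩ with hr
  have hrinj : Function.Injective r := by
    intro j1 j2 hj
    have h1 : (j1.1 + k) % l = (j2.1 + k) % l := congrArg Fin.val hj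
    have h2 : j1.1 % l = j2.1 % l := Nat.ModEq.add_right_cancel' k h1
    apply finmk _ _ _
    rwa [Nat.mod_eq_of_lt j1.2, Nat.mod_eq_of_lt j2.2] at h2
  refine ⟨fun j => v (r j), fun j => ed (r j), fun x y h => hrinj (hv h),
    fun x y h => hrinj (he h), ?_, fun j => ⟨rfl, rfl⟩⟩
  intro i
  obtain ⟨h₁, h₂, hp⟩ := hc (r i)
  have hidx : r ⟨(i.1 + 1) % l, Nat.mod_lt _ hl⟩
      = ⟨((r i).1 + 1) % l, Nat.mod_lt _ hl⟩ := by
    apply finmk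
    show ((i.1 + 1) % l + k) % l = ((i.1 + k) % l + 1) % l
    rw [Nat.mod_add_mod, Nat.mod_add_mod]
    congr 1
    omega
  refine ⟨h₁, h₂, hp.trans ?_⟩
  dsimp only
  rw [hidx]

/-- Building a cycle from nodes, a list of edges and a closing edge. -/
lemma cycle_build (H₀ : Hypergraph C tc) {m : ℕ} (hm : 0 < m) (v : Fin m → H₀.V)
    (ed : (j : ℕ) → j < m - 1 → H₀.E) (elast : H₀.E)
    (hv : Function.Injective v)
    (he : ∀ j1 j2 (h1 : j1 < m - 1) (h2 : j2 < m - 1), ed j1 h1 = ed j2 h2 → j1 = j2)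
    (hel : ∀ j h, ed j h ≠ elast)
    (hc : ∀ j (hj : j < m - 1), ∃ (h₁ : 1 ∈ tc (H₀.lab (ed j hj)))
        (h₂ : 2 ∈ tc (H₀.lab (ed j hj))),
      ({H₀.att (ed j hj) 1 h₁, H₀.att (ed j hj) 2 h₂} : Set H₀.V)
        = {v ⟨j, by omega⟩, v ⟨j + 1, by omega⟩})
    (hlast : ∃ (h₁ : 1 ∈ tc (H₀.lab elast)) (h₂ : 2 ∈ tc (H₀.lab elast)),
      ({H₀.att elast 1 h₁, H₀.att elast 2 h₂} : Set H₀.V)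
        = {v ⟨m - 1, by omega⟩, v ⟨0, hm⟩}) :
    HasUndirectedCycle H₀ := by
  refine ⟨m, hm, v, fun j => if hj : j.1 < m - 1 then ed j.1 hj else elast, hv, ?_, ?_⟩
  · intro j1 j2 hj
    dsimp only at hj
    apply finmk
    by_cases h1 : j1.1 < m - 1 <;> by_cases h2 : j2.1 < m - 1
    · rw [dif_pos h1, dif_pos h2] at hj
      exact he _ _ h1 h2 hj
    · rw [dif_pos h1, dif_neg h2] at hj
      exact absurd hj (hel _ h1)
    · rw [dif_neg h1, dif_pos h2] at hj
      exact absurd hj.symm (hel _ h2)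
    · have := j1.2; have := j2.2; omega
  · intro i
    dsimp only
    by_cases hi : i.1 < m - 1
    · rw [dif_pos hi]
      obtain ⟨h₁, h₂, hp⟩ := hc i.1 hi
      refine ⟨h₁, h₂, hp.trans (Set.pair_eq_pair_iff.mpr (Or.inl ⟨?_, ?_⟩))⟩
      · exact congrArg v (finmk _ _ rfl)
      · exact congrArg v (finmk _ _ (Nat.mod_eq_of_lt (by omega)).symm)
    · rw [dif_neg hi]
      have h1 : i.1 = m - 1 := by have := i.2; omega
      obtain ⟨h₁, h₂, hp⟩ := hlast
      refine ⟨h₁, h₂, hp.trans (Set.pair_eq_pair_iff.mpr (Or.inl ⟨?_, ?_⟩))⟩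
      · exact congrArg v (finmk _ _ h1.symm)
      · refine congrArg v (finmk _ _ ?_)
        have : (i.1 + 1) % m = 0 := by
          rw [h1, Nat.sub_add_cancel hm, Nat.mod_self]
        omega

namespace StAux

variable (a : C) (H : Hypergraph C tc) (e : H.E)

lemma memH (hta : tc a = ({1, 2} : Finset ℕ)) (hH : ∀ e' : H.E, H.lab e' = a)
    (σ : ℕ) (hσ : σ ∈ ({1, 2} : Finset ℕ)) (e' : H.E) : σ ∈ tc (H.lab e') := by
  rw [hH e', hta]; exact hσ

def iota (v : H.V) : (replace H e (SG [a, a])).V := Quot.mk _ (Sum.inl v)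

def fresh : (replace H e (SG [a, a])).V := Quot.mk _ (Sum.inr (⟨1, by omega⟩ : Fin 3))

def psi (hta : tc a = ({1, 2} : Finset ℕ)) (hH : ∀ e' : H.E, H.lab e' = a) :
    (replace H e (SG [a, a])).V → H.V ⊕ Unit :=
  Quot.lift
    (Sum.elim Sum.inl (fun i =>
      if i.1 = 1 then Sum.inr ()
      else if i.1 = 0 then Sum.inl (H.att e 1 (memH a H hta hH 1 (by decide) e))
      else Sum.inl (H.att e 2 (memH a H hta hH 2 (by decide) e))))
    (by
      rintro x y ⟨σ, h, h', rfl, rfl⟩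
      have hσ : σ ∈ ({1, 2} : Finset ℕ) := by rw [← hta, ← hH e]; exact h
      rcases Finset.mem_insert.mp hσ with rfl | hσ
      · rfl
      · rcases Finset.mem_singleton.mp hσ with rfl
        rfl)

lemma E2_cases (i : (SG [a, a] : Hypergraph C tc).E) :
    i = (⟨0, by omega⟩ : Fin 2) ∨ i = (⟨1, by omega⟩ : Fin 2) := by
  rcases i with ⟨iv, hiv⟩
  have hiv' : iv < 2 := hiv
  interval_cases iv
  · exact Or.inl rfl
  · exact Or.inr rfl

lemma V3_cases (i : (SG [a, a] : Hypergraph C tc).V) :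
    i = (⟨0, by omega⟩ : Fin 3) ∨ i = (⟨1, by omega⟩ : Fin 3) ∨ i = (⟨2, by omega⟩ : Fin 3) := by
  rcases i with ⟨iv, hiv⟩
  have hiv' : iv < 3 := hiv
  interval_cases iv
  · exact Or.inl rfl
  · exact Or.inr (Or.inl rfl)
  · exact Or.inr (Or.inr rfl)

lemma psi_iota (hta : tc a = ({1, 2} : Finset ℕ)) (hH : ∀ e' : H.E, H.lab e' = a)
    (v : H.V) : psi a H e hta hH (iota a H e v) = Sum.inl v := rfl

lemma psi_fresh (hta : tc a = ({1, 2} : Finset ℕ)) (hH : ∀ e' : H.E, H.lab e' = a) :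
    psi a H e hta hH (fresh a H e) = Sum.inr () := rfl

lemma iota_inj (hta : tc a = ({1, 2} : Finset ℕ)) (hH : ∀ e' : H.E, H.lab e' = a) :
    Function.Injective (iota a H e) := by
  intro v w h
  have h2 := congrArg (psi a H e hta hH) h
  rw [psi_iota, psi_iota] at h2
  exact Sum.inl.inj h2

lemma iota_ne_fresh (hta : tc a = ({1, 2} : Finset ℕ)) (hH : ∀ e' : H.E, H.lab e' = a)
    (v : H.V) : iota a H e v ≠ fresh a H e := by
  intro h
  have h2 := congrArg (psi a H e hta hH) h
  rw [psi_iota, psi_fresh] at h2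
  exact Sum.inl_ne_inr h2

lemma mk_inr0 (hta : tc a = ({1, 2} : Finset ℕ)) (hH : ∀ e' : H.E, H.lab e' = a) :
    (Quot.mk (glueRel H e (SG [a, a])) (Sum.inr (⟨0, by omega⟩ : Fin 3)))
      = iota a H e (H.att e 1 (memH a H hta hH 1 (by decide) e)) := by
  have hm : (1 : ℕ) ∈ (SG [a, a] : Hypergraph C tc).extType := by simp [SG]
  exact (Quot.sound ⟨1, memH a H hta hH 1 (by decide) e, hm, rfl, rfl⟩).symm

lemma mk_inr2 (hta : tc a = ({1, 2} : Finset ℕ)) (hH : ∀ e' : H.E, H.lab e' = a) :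
    (Quot.mk (glueRel H e (SG [a, a])) (Sum.inr (⟨2, by omega⟩ : Fin 3)))
      = iota a H e (H.att e 2 (memH a H hta hH 2 (by decide) e)) := by
  have hm : (2 : ℕ) ∈ (SG [a, a] : Hypergraph C tc).extType := by simp [SG]
  exact (Quot.sound ⟨2, memH a H hta hH 2 (by decide) e, hm, rfl, rfl⟩).symm

lemma V_cases (hta : tc a = ({1, 2} : Finset ℕ)) (hH : ∀ e' : H.E, H.lab e' = a)
    (x : (replace H e (SG [a, a])).V) :
    (∃ v, x = iota a H e v) ∨ x = fresh a H e := by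
  induction x using Quot.ind with
  | _ y =>
    rcases y with v | i
    · exact Or.inl ⟨v, rfl⟩
    · rcases V3_cases a i with rfl | rfl | rfl
      · exact Or.inl ⟨_, mk_inr0 a H e hta hH⟩
      · exact Or.inr rfl
      · exact Or.inl ⟨_, mk_inr2 a H e hta hH⟩

lemma lab' (hH : ∀ e' : H.E, H.lab e' = a) (x : (replace H e (SG [a, a])).E) :
    (replace H e (SG [a, a])).lab x = a := by
  rcases x with e' | i
  · exact hH e'.1
  · rcases E2_cases a i with rfl | rfl <;> rfl

lemma memH' (hta : tc a = ({1, 2} : Finset ℕ)) (hH : ∀ e' : H.E, H.lab e' = a)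
    (σ : ℕ) (hσ : σ ∈ ({1, 2} : Finset ℕ)) (x : (replace H e (SG [a, a])).E) :
    σ ∈ tc ((replace H e (SG [a, a])).lab x) := by
  rw [lab' a H e hH x, hta]; exact hσ

lemma att_inl (e' : {e' : H.E // e' ≠ e}) (σ : ℕ)
    (h : σ ∈ tc ((replace H e (SG [a, a])).lab (Sum.inl e'))) :
    (replace H e (SG [a, a])).att (Sum.inl e') σ h = iota a H e (H.att e'.1 σ h) := rfl

lemma att_inr0_1 (hta : tc a = ({1, 2} : Finset ℕ)) (hH : ∀ e' : H.E, H.lab e' = a)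
    (h : (1 : ℕ) ∈ tc ((replace H e (SG [a, a])).lab (Sum.inr (⟨0, by omega⟩ : Fin 2)))) :
    (replace H e (SG [a, a])).att (Sum.inr (⟨0, by omega⟩ : Fin 2)) 1 h
      = iota a H e (H.att e 1 (memH a H hta hH 1 (by decide) e)) :=
  mk_inr0 a H e hta hH

lemma att_inr0_2 (h : (2 : ℕ) ∈ tc ((replace H e (SG [a, a])).lab (Sum.inr (⟨0, by omega⟩ : Fin 2)))) :
    (replace H e (SG [a, a])).att (Sum.inr (⟨0, by omega⟩ : Fin 2)) 2 h = fresh a H e := rfl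

lemma att_inr1_1 (h : (1 : ℕ) ∈ tc ((replace H e (SG [a, a])).lab (Sum.inr (⟨1, by omega⟩ : Fin 2)))) :
    (replace H e (SG [a, a])).att (Sum.inr (⟨1, by omega⟩ : Fin 2)) 1 h = fresh a H e := rfl

lemma att_inr1_2 (hta : tc a = ({1, 2} : Finset ℕ)) (hH : ∀ e' : H.E, H.lab e' = a)
    (h : (2 : ℕ) ∈ tc ((replace H e (SG [a, a])).lab (Sum.inr (⟨1, by omega⟩ : Fin 2)))) :
    (replace H e (SG [a, a])).att (Sum.inr (⟨1, by omega⟩ : Fin 2)) 2 h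
      = iota a H e (H.att e 2 (memH a H hta hH 2 (by decide) e)) :=
  mk_inr2 a H e hta hH

lemma isExternal_iota (hta : tc a = ({1, 2} : Finset ℕ)) (hH : ∀ e' : H.E, H.lab e' = a)
    (v : H.V) :
    IsExternal (replace H e (SG [a, a])) (iota a H e v) ↔ IsExternal H v := by
  constructor
  · rintro ⟨σ, h, hv⟩
    exact ⟨σ, h, iota_inj a H e hta hH hv⟩
  · rintro ⟨σ, h, hv⟩
    exact ⟨σ, h, congrArg (iota a H e) hv⟩

lemma not_isExternal_fresh (hta : tc a = ({1, 2} : Finset ℕ))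
    (hH : ∀ e' : H.E, H.lab e' = a) :
    ¬ IsExternal (replace H e (SG [a, a])) (fresh a H e) := by
  rintro ⟨σ, h, hv⟩
  exact iota_ne_fresh a H e hta hH _ hv

open Classical in
noncomputable def theta2 (e' : H.E) : (replace H e (SG [a, a])).E :=
  if h : e' = e then Sum.inr (⟨1, by omega⟩ : Fin 2) else Sum.inl ⟨e', h⟩

open Classical in
noncomputable def theta1 (e' : H.E) : (replace H e (SG [a, a])).E :=
  if h : e' = e then Sum.inr (⟨0, by omega⟩ : Fin 2) else Sum.inl ⟨e', h⟩

lemma theta2_inj : Function.Injective (theta2 a H e) := by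
  intro x y hxy
  by_cases h1 : x = e <;> by_cases h2 : y = e
  · rw [h1, h2]
  · have hx : theta2 a H e x = Sum.inr (⟨1, by omega⟩ : Fin 2) := by unfold theta2; exact dif_pos h1
    have hy : theta2 a H e y = Sum.inl ⟨y, h2⟩ := by unfold theta2; exact dif_neg h2
    rw [hx, hy] at hxy
    exact absurd hxy Sum.inr_ne_inl
  · have hx : theta2 a H e x = Sum.inl ⟨x, h1⟩ := by unfold theta2; exact dif_neg h1
    have hy : theta2 a H e y = Sum.inr (⟨1, by omega⟩ : Fin 2) := by unfold theta2; exact dif_pos h2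
    rw [hx, hy] at hxy
    exact absurd hxy Sum.inl_ne_inr
  · have hx : theta2 a H e x = Sum.inl ⟨x, h1⟩ := by unfold theta2; exact dif_neg h1
    have hy : theta2 a H e y = Sum.inl ⟨y, h2⟩ := by unfold theta2; exact dif_neg h2
    rw [hx, hy] at hxy
    exact congrArg Subtype.val (Sum.inl_injective hxy)

lemma theta1_inj : Function.Injective (theta1 a H e) := by
  intro x y hxy
  by_cases h1 : x = e <;> by_cases h2 : y = e
  · rw [h1, h2]
  · have hx : theta1 a H e x = Sum.inr (⟨0, by omega⟩ : Fin 2) := by unfold theta1; exact dif_pos h1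
    have hy : theta1 a H e y = Sum.inl ⟨y, h2⟩ := by unfold theta1; exact dif_neg h2
    rw [hx, hy] at hxy
    exact absurd hxy Sum.inr_ne_inl
  · have hx : theta1 a H e x = Sum.inl ⟨x, h1⟩ := by unfold theta1; exact dif_neg h1
    have hy : theta1 a H e y = Sum.inr (⟨0, by omega⟩ : Fin 2) := by unfold theta1; exact dif_pos h2
    rw [hx, hy] at hxy
    exact absurd hxy Sum.inl_ne_inr
  · have hx : theta1 a H e x = Sum.inl ⟨x, h1⟩ := by unfold theta1; exact dif_neg h1
    have hy : theta1 a H e y = Sum.inl ⟨y, h2⟩ := by unfold theta1; exact dif_neg h2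
    rw [hx, hy] at hxy
    exact congrArg Subtype.val (Sum.inl_injective hxy)

lemma att2_theta2 (hta : tc a = ({1, 2} : Finset ℕ)) (hH : ∀ e' : H.E, H.lab e' = a)
    (e' : H.E) (h : 2 ∈ tc (H.lab e')) :
    ∀ h', (replace H e (SG [a, a])).att (theta2 a H e e') 2 h'
      = iota a H e (H.att e' 2 h) := by
  by_cases hc : e' = e
  · subst hc
    rw [show theta2 a H e' e' = Sum.inr (⟨1, by omega⟩ : Fin 2) from by unfold theta2; exact dif_pos rfl]
    intro h'
    exact att_inr1_2 a H e' hta hH h'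
  · rw [show theta2 a H e e' = Sum.inl ⟨e', hc⟩ from by unfold theta2; exact dif_neg hc]
    intro h'
    rfl

lemma att1_theta1 (hta : tc a = ({1, 2} : Finset ℕ)) (hH : ∀ e' : H.E, H.lab e' = a)
    (e' : H.E) (h : 1 ∈ tc (H.lab e')) :
    ∀ h', (replace H e (SG [a, a])).att (theta1 a H e e') 1 h'
      = iota a H e (H.att e' 1 h) := by
  by_cases hc : e' = e
  · subst hc
    rw [show theta1 a H e' e' = Sum.inr (⟨0, by omega⟩ : Fin 2) from by unfold theta1; exact dif_pos rfl]
    intro h'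
    exact att_inr0_1 a H e' hta hH h'
  · rw [show theta1 a H e e' = Sum.inl ⟨e', hc⟩ from by unfold theta1; exact dif_neg hc]
    intro h'
    rfl

lemma inDeg_iota (hta : tc a = ({1, 2} : Finset ℕ)) (hH : ∀ e' : H.E, H.lab e' = a)
    (v : H.V) :
    inDeg (replace H e (SG [a, a])) (iota a H e v) = inDeg H v := by
  simp only [inDeg]
  refine (Nat.card_eq_of_bijective (fun p =>
    ⟨theta2 a H e p.1, memH' a H e hta hH 2 (by decide) _, by
      obtain ⟨h, hp⟩ := p.2
      rw [att2_theta2 a H e hta hH p.1 h, hp]⟩) ⟨?_, ?_⟩).symm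
  · intro p q hpq
    apply Subtype.ext
    exact theta2_inj a H e (congrArg Subtype.val hpq)
  · rintro ⟨x, hx⟩
    obtain ⟨h', hx⟩ := hx
    rcases x with e' | i
    · have hval : H.att e'.1 2 h' = v :=
        iota_inj a H e hta hH ((att_inl a H e e' 2 h').symm.trans hx)
      refine ⟨⟨e'.1, h', hval⟩, ?_⟩
      apply Subtype.ext
      show theta2 a H e e'.1 = Sum.inl e'
      unfold theta2; exact dif_neg e'.2
    · rcases E2_cases a i with rfl | rfl
      · exact absurd ((att_inr0_2 a H e h').symm.trans hx).symm
          (iota_ne_fresh a H e hta hH v)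
      · have hval : H.att e 2 (memH a H hta hH 2 (by decide) e) = v :=
          iota_inj a H e hta hH ((att_inr1_2 a H e hta hH h').symm.trans hx)
        refine ⟨⟨e, memH a H hta hH 2 (by decide) e, hval⟩, ?_⟩
        apply Subtype.ext
        show theta2 a H e e = Sum.inr (⟨1, by omega⟩ : Fin 2)
        unfold theta2; exact dif_pos rfl

lemma outDeg_iota (hta : tc a = ({1, 2} : Finset ℕ)) (hH : ∀ e' : H.E, H.lab e' = a)
    (v : H.V) :
    outDeg (replace H e (SG [a, a])) (iota a H e v) = outDeg H v := by
  simp only [outDeg]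
  refine (Nat.card_eq_of_bijective (fun p =>
    ⟨theta1 a H e p.1, memH' a H e hta hH 1 (by decide) _, by
      obtain ⟨h, hp⟩ := p.2
      rw [att1_theta1 a H e hta hH p.1 h, hp]⟩) ⟨?_, ?_⟩).symm
  · intro p q hpq
    apply Subtype.ext
    exact theta1_inj a H e (congrArg Subtype.val hpq)
  · rintro ⟨x, hx⟩
    obtain ⟨h', hx⟩ := hx
    rcases x with e' | i
    · have hval : H.att e'.1 1 h' = v :=
        iota_inj a H e hta hH ((att_inl a H e e' 1 h').symm.trans hx)
      refine ⟨⟨e'.1, h', hval⟩, ?_⟩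
      apply Subtype.ext
      show theta1 a H e e'.1 = Sum.inl e'
      unfold theta1; exact dif_neg e'.2
    · rcases E2_cases a i with rfl | rfl
      · have hval : H.att e 1 (memH a H hta hH 1 (by decide) e) = v :=
          iota_inj a H e hta hH ((att_inr0_1 a H e hta hH h').symm.trans hx)
        refine ⟨⟨e, memH a H hta hH 1 (by decide) e, hval⟩, ?_⟩
        apply Subtype.ext
        show theta1 a H e e = Sum.inr (⟨0, by omega⟩ : Fin 2)
        unfold theta1; exact dif_pos rfl
      · exact absurd ((att_inr1_1 a H e h').symm.trans hx).symm
          (iota_ne_fresh a H e hta hH v)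

lemma inDeg_fresh (hta : tc a = ({1, 2} : Finset ℕ)) (hH : ∀ e' : H.E, H.lab e' = a) :
    inDeg (replace H e (SG [a, a])) (fresh a H e) = 1 := by
  simp only [inDeg]
  rw [Nat.card_eq_one_iff_unique]
  have key : ∀ (z : (replace H e (SG [a, a])).E),
      (∃ h, (replace H e (SG [a, a])).att z 2 h = fresh a H e) → z = Sum.inr (⟨0, by omega⟩ : Fin 2) := by
    rintro (e' | i) ⟨h, hz⟩
    · exact absurd hz (by rw [att_inl]; exact iota_ne_fresh a H e hta hH _)
    · rcases E2_cases a i with rfl | rfl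
      · rfl
      · exact absurd hz (by
          rw [att_inr1_2 a H e hta hH]
          exact iota_ne_fresh a H e hta hH _)
  constructor
  · constructor
    rintro ⟨x, hx⟩ ⟨y, hy⟩
    apply Subtype.ext
    show x = y
    rw [key x hx, key y hy]
  · exact ⟨⟨Sum.inr (⟨0, by omega⟩ : Fin 2), memH' a H e hta hH 2 (by decide) _, att_inr0_2 a H e _⟩⟩

lemma outDeg_fresh (hta : tc a = ({1, 2} : Finset ℕ)) (hH : ∀ e' : H.E, H.lab e' = a) :
    outDeg (replace H e (SG [a, a])) (fresh a H e) = 1 := by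
  simp only [outDeg]
  rw [Nat.card_eq_one_iff_unique]
  have key : ∀ (z : (replace H e (SG [a, a])).E),
      (∃ h, (replace H e (SG [a, a])).att z 1 h = fresh a H e) → z = Sum.inr (⟨1, by omega⟩ : Fin 2) := by
    rintro (e' | i) ⟨h, hz⟩
    · exact absurd hz (by rw [att_inl]; exact iota_ne_fresh a H e hta hH _)
    · rcases E2_cases a i with rfl | rfl
      · exact absurd hz (by
          rw [att_inr0_1 a H e hta hH]
          exact iota_ne_fresh a H e hta hH _)
      · rfl
  constructor
  · constructor
    rintro ⟨x, hx⟩ ⟨y, hy⟩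
    apply Subtype.ext
    show x = y
    rw [key x hx, key y hy]
  · exact ⟨⟨Sum.inr (⟨1, by omega⟩ : Fin 2), memH' a H e hta hH 1 (by decide) _, att_inr1_1 a H e _⟩⟩

lemma badNode_iota (hta : tc a = ({1, 2} : Finset ℕ)) (hH : ∀ e' : H.E, H.lab e' = a)
    (v : H.V) :
    BadNode (replace H e (SG [a, a])) (iota a H e v) ↔ BadNode H v := by
  unfold BadNode
  rw [isExternal_iota a H e hta hH, inDeg_iota a H e hta hH, outDeg_iota a H e hta hH]

lemma fresh_not_bad (hta : tc a = ({1, 2} : Finset ℕ)) (hH : ∀ e' : H.E, H.lab e' = a) :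
    ¬ BadNode (replace H e (SG [a, a])) (fresh a H e) := by
  rintro ⟨hex, hdeg | hdeg⟩
  · exact hdeg (inDeg_fresh a H e hta hH)
  · exact hdeg (outDeg_fresh a H e hta hH)

lemma not_both_fresh (hta : tc a = ({1, 2} : Finset ℕ)) (hH : ∀ e' : H.E, H.lab e' = a) :
    ∀ (x : (replace H e (SG [a, a])).E) h₁ h₂,
      (replace H e (SG [a, a])).att x 1 h₁ = fresh a H e →
      (replace H e (SG [a, a])).att x 2 h₂ = fresh a H e → False := by
  rintro (q | i2) h₁ h₂ ha hb
  · exact iota_ne_fresh a H e hta hH _ ha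
  · rcases E2_cases a i2 with rfl | rfl
    · exact iota_ne_fresh a H e hta hH _ ((att_inr0_1 a H e hta hH h₁).symm.trans ha)
    · exact iota_ne_fresh a H e hta hH _ ((att_inr1_2 a H e hta hH h₂).symm.trans hb)

lemma cycle_of_not_mem (hta : tc a = ({1, 2} : Finset ℕ)) (hH : ∀ e' : H.E, H.lab e' = a)
    {l : ℕ} (hl : 0 < l) (v : Fin l → H.V) (ed : Fin l → H.E)
    (hv : Function.Injective v) (he : Function.Injective ed)
    (hc : ∀ i : Fin l, ∃ (h₁ : 1 ∈ tc (H.lab (ed i))) (h₂ : 2 ∈ tc (H.lab (ed i))),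
      ({H.att (ed i) 1 h₁, H.att (ed i) 2 h₂} : Set H.V)
        = {v i, v ⟨(i.1 + 1) % l, Nat.mod_lt _ hl⟩})
    (hne : ∀ i, ed i ≠ e) :
    HasUndirectedCycle (replace H e (SG [a, a])) := by
  refine ⟨l, hl, fun i => iota a H e (v i), fun i => Sum.inl ⟨ed i, hne i⟩, ?_, ?_, ?_⟩
  · exact fun i j h => hv (iota_inj a H e hta hH h)
  · exact fun i j h => he (congrArg Subtype.val (Sum.inl.inj h))
  · intro i
    obtain ⟨h₁, h₂, hp⟩ := hc i
    exact ⟨memH' a H e hta hH 1 (by decide) _, memH' a H e hta hH 2 (by decide) _,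
      (pair_image_iff (iota_inj a H e hta hH)).mpr hp⟩

lemma cycle_of_last (hta : tc a = ({1, 2} : Finset ℕ)) (hH : ∀ e' : H.E, H.lab e' = a)
    {l : ℕ} (hl : 0 < l) (v : Fin l → H.V) (ed : Fin l → H.E)
    (hv : Function.Injective v) (he : Function.Injective ed)
    (hc : ∀ i : Fin l, ∃ (h₁ : 1 ∈ tc (H.lab (ed i))) (h₂ : 2 ∈ tc (H.lab (ed i))),
      ({H.att (ed i) 1 h₁, H.att (ed i) 2 h₂} : Set H.V)
        = {v i, v ⟨(i.1 + 1) % l, Nat.mod_lt _ hl⟩})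
    (hlast : ed ⟨l - 1, Nat.sub_lt hl Nat.one_pos⟩ = e) :
    HasUndirectedCycle (replace H e (SG [a, a])) := by
  classical
  have hc' := hc ⟨l - 1, Nat.sub_lt hl Nat.one_pos⟩
  rw [hlast] at hc'
  obtain ⟨h₁, h₂, hp⟩ := hc'
  have hidx0 : ((l - 1 : ℕ) + 1) % l = 0 := by
    rw [Nat.sub_add_cancel hl, Nat.mod_self]
  have hrw : (⟨((⟨l - 1, Nat.sub_lt hl Nat.one_pos⟩ : Fin l).1 + 1) % l,
      Nat.mod_lt _ hl⟩ : Fin l) = (⟨0, hl⟩ : Fin l) := finmk _ _ hidx0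
  rw [hrw] at hp
  have nej : ∀ (j : ℕ) (hj : j < l - 1), ed ⟨j, by omega⟩ ≠ e := by
    intro j hj hq
    have h2 : j = l - 1 := congrArg Fin.val (he (hq.trans hlast.symm))
    omega
  set v' : Fin (l + 1) → (replace H e (SG [a, a])).V :=
    fun j => if hj : j.1 < l then iota a H e (v ⟨j.1, hj⟩) else fresh a H e with hv'def
  have hv'inj : Function.Injective v' := by
    rintro ⟨x, hx⟩ ⟨y, hy⟩ hj
    simp only [hv'def] at hj
    apply finmk
    by_cases h1 : x < l <;> by_cases h2 : y < l
    · rw [dif_pos h1, dif_pos h2] at hj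
      exact congrArg Fin.val (hv (iota_inj a H e hta hH hj))
    · rw [dif_pos h1, dif_neg h2] at hj
      exact absurd hj (iota_ne_fresh a H e hta hH _)
    · rw [dif_neg h1, dif_pos h2] at hj
      exact absurd hj.symm (iota_ne_fresh a H e hta hH _)
    · omega
  have hv'lt : ∀ (jn : ℕ) (h2 : jn < l) (pf : jn < l + 1),
      v' ⟨jn, pf⟩ = iota a H e (v ⟨jn, h2⟩) := by
    intro jn h2 pf
    simp only [hv'def]
    rw [dif_pos (show ((⟨jn, pf⟩ : Fin (l + 1)) : ℕ) < l from h2)]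
  have hv'ge : ∀ (jn : ℕ) (h2 : ¬ jn < l) (pf : jn < l + 1),
      v' ⟨jn, pf⟩ = fresh a H e := by
    intro jn h2 pf
    simp only [hv'def]
    rw [dif_neg (show ¬ ((⟨jn, pf⟩ : Fin (l + 1)) : ℕ) < l from h2)]
  have hcsub : ∀ (j : ℕ) (hj : j < l - 1),
      ∃ (g₁ : 1 ∈ tc (H.lab (ed ⟨j, by omega⟩))) (g₂ : 2 ∈ tc (H.lab (ed ⟨j, by omega⟩))),
        ({H.att (ed ⟨j, by omega⟩) 1 g₁, H.att (ed ⟨j, by omega⟩) 2 g₂} : Set H.V)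
          = {v ⟨j, by omega⟩, v ⟨j + 1, by omega⟩} := by
    intro j hj
    obtain ⟨g₁, g₂, hg⟩ := hc ⟨j, by omega⟩
    refine ⟨g₁, g₂, hg.trans (Set.pair_eq_pair_iff.mpr (Or.inl ⟨?_, ?_⟩))⟩
    · exact congrArg v (finmk _ _ rfl)
    · exact congrArg v (finmk _ _ (Nat.mod_eq_of_lt (show j + 1 < l by omega)))
  rcases Set.pair_eq_pair_iff.mp hp with ⟨ha1, ha2⟩ | ⟨ha1, ha2⟩
  · -- att e 1 = v (l-1), att e 2 = v 0
    refine cycle_build (replace H e (SG [a, a])) (m := l + 1) (by omega) v'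
      (fun j hj => if hj2 : j < l - 1 then Sum.inl ⟨ed ⟨j, by omega⟩, nej j hj2⟩
        else Sum.inr (⟨0, by omega⟩ : Fin 2))
      (Sum.inr (⟨1, by omega⟩ : Fin 2)) hv'inj ?_ ?_ ?_ ?_
    · intro j1 j2 g1 g2 hj
      by_cases c1 : j1 < l - 1 <;> by_cases c2 : j2 < l - 1
      · erw [dif_pos c1, dif_pos c2] at hj
        have h2 : j1 = j2 := congrArg Fin.val (he (congrArg Subtype.val (Sum.inl.inj hj)))
        exact h2
      · erw [dif_pos c1, dif_neg c2] at hj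
        exact absurd hj Sum.inl_ne_inr
      · erw [dif_neg c1, dif_pos c2] at hj
        exact absurd hj Sum.inr_ne_inl
      · omega
    · intro j hj
      by_cases c : j < l - 1
      · erw [dif_pos c]
        intro hq
        exact absurd hq Sum.inl_ne_inr
      · erw [dif_neg c]
        intro hq
        have h9 : (0 : ℕ) = 1 := congrArg Fin.val (Sum.inr.inj hq)
        omega
    · intro j hj
      by_cases c : j < l - 1
      · erw [dif_pos c]
        obtain ⟨g₁, g₂, hg⟩ := hcsub j c
        refine ⟨memH' a H e hta hH 1 (by decide) _, memH' a H e hta hH 2 (by decide) _, ?_⟩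
        have key : ({iota a H e (H.att (ed ⟨j, by omega⟩) 1 g₁),
            iota a H e (H.att (ed ⟨j, by omega⟩) 2 g₂)} : Set (replace H e (SG [a, a])).V)
            = {v' ⟨j, by omega⟩, v' ⟨j + 1, by omega⟩} := by
          have e1 : v' ⟨j, by omega⟩ = iota a H e (v ⟨j, by omega⟩) :=
            hv'lt j (by omega) (by omega)
          have e2 : v' ⟨j + 1, by omega⟩ = iota a H e (v ⟨j + 1, by omega⟩) :=
            hv'lt (j + 1) (by omega) (by omega)
          rw [e1, e2]
          exact (pair_image_iff (iota_inj a H e hta hH)).mpr hg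
        exact key
      · have c2 : j = l - 1 := by omega
        subst c2
        erw [dif_neg c]
        refine ⟨memH' a H e hta hH 1 (by decide) _, memH' a H e hta hH 2 (by decide) _,
          Set.pair_eq_pair_iff.mpr (Or.inl ⟨?_, ?_⟩)⟩
        · refine (att_inr0_1 a H e hta hH _).trans
            ((congrArg (iota a H e) ha1).trans ?_)
          exact (hv'lt (l - 1) (by omega) (by omega)).symm
        · refine (att_inr0_2 a H e _).trans ?_
          exact (hv'ge (l - 1 + 1) (by omega) (by omega)).symm
    · refine ⟨memH' a H e hta hH 1 (by decide) _, memH' a H e hta hH 2 (by decide) _,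
        Set.pair_eq_pair_iff.mpr (Or.inl ⟨?_, ?_⟩)⟩
      · refine (att_inr1_1 a H e _).trans ?_
        exact (hv'ge (l + 1 - 1) (by omega) (by omega)).symm
      · refine (att_inr1_2 a H e hta hH _).trans
          ((congrArg (iota a H e) ha2).trans ?_)
        exact (hv'lt 0 hl (by omega)).symm
  · -- att e 1 = v 0, att e 2 = v (l-1)
    refine cycle_build (replace H e (SG [a, a])) (m := l + 1) (by omega) v'
      (fun j hj => if hj2 : j < l - 1 then Sum.inl ⟨ed ⟨j, by omega⟩, nej j hj2⟩
        else Sum.inr (⟨1, by omega⟩ : Fin 2))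
      (Sum.inr (⟨0, by omega⟩ : Fin 2)) hv'inj ?_ ?_ ?_ ?_
    · intro j1 j2 g1 g2 hj
      by_cases c1 : j1 < l - 1 <;> by_cases c2 : j2 < l - 1
      · erw [dif_pos c1, dif_pos c2] at hj
        exact congrArg Fin.val (he (congrArg Subtype.val (Sum.inl.inj hj)))
      · erw [dif_pos c1, dif_neg c2] at hj
        exact absurd hj Sum.inl_ne_inr
      · erw [dif_neg c1, dif_pos c2] at hj
        exact absurd hj Sum.inr_ne_inl
      · omega
    · intro j hj
      by_cases c : j < l - 1
      · erw [dif_pos c]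
        intro hq
        exact absurd hq Sum.inl_ne_inr
      · erw [dif_neg c]
        intro hq
        have h9 : (1 : ℕ) = 0 := congrArg Fin.val (Sum.inr.inj hq)
        omega
    · intro j hj
      by_cases c : j < l - 1
      · erw [dif_pos c]
        obtain ⟨g₁, g₂, hg⟩ := hcsub j c
        refine ⟨memH' a H e hta hH 1 (by decide) _, memH' a H e hta hH 2 (by decide) _, ?_⟩
        have key : ({iota a H e (H.att (ed ⟨j, by omega⟩) 1 g₁),
            iota a H e (H.att (ed ⟨j, by omega⟩) 2 g₂)} : Set (replace H e (SG [a, a])).V)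
            = {v' ⟨j, by omega⟩, v' ⟨j + 1, by omega⟩} := by
          have e1 : v' ⟨j, by omega⟩ = iota a H e (v ⟨j, by omega⟩) :=
            hv'lt j (by omega) (by omega)
          have e2 : v' ⟨j + 1, by omega⟩ = iota a H e (v ⟨j + 1, by omega⟩) :=
            hv'lt (j + 1) (by omega) (by omega)
          rw [e1, e2]
          exact (pair_image_iff (iota_inj a H e hta hH)).mpr hg
        exact key
      · have c2 : j = l - 1 := by omega
        subst c2
        erw [dif_neg c]
        refine ⟨memH' a H e hta hH 1 (by decide) _, memH' a H e hta hH 2 (by decide) _,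
          Set.pair_eq_pair_iff.mpr (Or.inr ⟨?_, ?_⟩)⟩
        · refine (att_inr1_1 a H e _).trans ?_
          exact (hv'ge (l - 1 + 1) (by omega) (by omega)).symm
        · refine (att_inr1_2 a H e hta hH _).trans
            ((congrArg (iota a H e) ha2).trans ?_)
          exact (hv'lt (l - 1) (by omega) (by omega)).symm
    · refine ⟨memH' a H e hta hH 1 (by decide) _, memH' a H e hta hH 2 (by decide) _,
        Set.pair_eq_pair_iff.mpr (Or.inr ⟨?_, ?_⟩)⟩
      · refine (att_inr0_1 a H e hta hH _).trans
          ((congrArg (iota a H e) ha1).trans ?_)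
        exact (hv'lt 0 hl (by omega)).symm
      · refine (att_inr0_2 a H e _).trans ?_
        exact (hv'ge (l + 1 - 1) (by omega) (by omega)).symm

lemma cycle_back_nofresh (hta : tc a = ({1, 2} : Finset ℕ)) (hH : ∀ e' : H.E, H.lab e' = a)
    {l : ℕ} (hl : 0 < l)
    (v' : Fin l → (replace H e (SG [a, a])).V) (ed' : Fin l → (replace H e (SG [a, a])).E)
    (hv : Function.Injective v') (he : Function.Injective ed')
    (hc : ∀ i : Fin l, ∃ (h₁ : 1 ∈ tc ((replace H e (SG [a, a])).lab (ed' i)))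
        (h₂ : 2 ∈ tc ((replace H e (SG [a, a])).lab (ed' i))),
      ({(replace H e (SG [a, a])).att (ed' i) 1 h₁,
        (replace H e (SG [a, a])).att (ed' i) 2 h₂} : Set (replace H e (SG [a, a])).V)
        = {v' i, v' ⟨(i.1 + 1) % l, Nat.mod_lt _ hl⟩})
    (hnf : ∀ i, v' i ≠ fresh a H e) :
    HasUndirectedCycle H := by
  have hvi : ∀ i, ∃ w, v' i = iota a H e w :=
    fun i => (V_cases a H e hta hH (v' i)).resolve_right (hnf i)
  choose w hw using hvi
  have hed : ∀ i, ∃ q : {x : H.E // x ≠ e}, ed' i = Sum.inl q := by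
    intro i
    rcases hq : ed' i with q | j
    · exact ⟨q, rfl⟩
    · exfalso
      rcases E2_cases a j with rfl | rfl
      all_goals (
        have hci := hc i
        rw [hq] at hci
        obtain ⟨h₁, h₂, hp⟩ := hci)
      · rcases Set.pair_eq_pair_iff.mp hp with ⟨u1, u2⟩ | ⟨u1, u2⟩ <;>
          exact hnf _ ((att_inr0_2 a H e h₂).symm.trans u2).symm
      · rcases Set.pair_eq_pair_iff.mp hp with ⟨u1, u2⟩ | ⟨u1, u2⟩ <;>
          exact hnf _ ((att_inr1_1 a H e h₁).symm.trans u1).symm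
  choose q hq using hed
  refine ⟨l, hl, w, fun i => (q i).1, ?_, ?_, ?_⟩
  · intro i j hij
    apply hv
    rw [hw i, hw j, hij]
  · intro i j hij
    apply he
    rw [hq i, hq j]
    exact congrArg Sum.inl (Subtype.ext hij)
  · intro i
    have hci := hc i
    rw [hq i] at hci
    obtain ⟨h₁, h₂, hp⟩ := hci
    refine ⟨h₁, h₂, ?_⟩
    refine (pair_image_iff (iota_inj a H e hta hH)).mp ?_
    have hp2 : ({iota a H e (H.att (q i).1 1 h₁), iota a H e (H.att (q i).1 2 h₂)}
        : Set (replace H e (SG [a, a])).V)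
        = {iota a H e (w i), iota a H e (w ⟨(i.1 + 1) % l, Nat.mod_lt _ hl⟩)} :=
      hp.trans (Set.pair_eq_pair_iff.mpr (Or.inl ⟨hw i, hw _⟩))
    exact hp2

lemma cycle_back_fresh (hta : tc a = ({1, 2} : Finset ℕ)) (hH : ∀ e' : H.E, H.lab e' = a)
    {l : ℕ} (hl : 0 < l)
    (v' : Fin l → (replace H e (SG [a, a])).V) (ed' : Fin l → (replace H e (SG [a, a])).E)
    (hv : Function.Injective v') (he : Function.Injective ed')
    (hc : ∀ i : Fin l, ∃ (h₁ : 1 ∈ tc ((replace H e (SG [a, a])).lab (ed' i)))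
        (h₂ : 2 ∈ tc ((replace H e (SG [a, a])).lab (ed' i))),
      ({(replace H e (SG [a, a])).att (ed' i) 1 h₁,
        (replace H e (SG [a, a])).att (ed' i) 2 h₂} : Set (replace H e (SG [a, a])).V)
        = {v' i, v' ⟨(i.1 + 1) % l, Nat.mod_lt _ hl⟩})
    (hfr : v' ⟨l - 1, Nat.sub_lt hl Nat.one_pos⟩ = fresh a H e) :
    HasUndirectedCycle H := by
  have hl2 : 2 ≤ l := by
    by_contra hcon
    have hl1 : l = 1 := by omega
    subst hl1
    have h0 : ∀ (jn : ℕ) (pf : jn < 1), v' ⟨jn, pf⟩ = fresh a H e := by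
      intro jn pf
      have hjn : jn = 0 := by omega
      subst hjn
      exact hfr
    obtain ⟨h₁, h₂, hp⟩ := hc ⟨0, hl⟩
    rcases Set.pair_eq_pair_iff.mp hp with ⟨u1, u2⟩ | ⟨u1, u2⟩ <;>
      exact not_both_fresh a H e hta hH _ h₁ h₂ (u1.trans (h0 _ _)) (u2.trans (h0 _ _))
  have hnf : ∀ i : Fin l, i.1 < l - 1 → v' i ≠ fresh a H e := by
    intro i hi hq2
    have h3 : i.1 = l - 1 := congrArg Fin.val (hv (hq2.trans hfr.symm))
    omega
  have hex : ∀ j : Fin (l - 1), ∃ x, v' ⟨j.1, by omega⟩ = iota a H e x := by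
    intro j
    exact (V_cases a H e hta hH (v' ⟨j.1, by omega⟩)).resolve_right
      (hnf ⟨j.1, by omega⟩ j.2)
  choose w hw using hex
  have hwinj : Function.Injective w := by
    intro j1 j2 hj
    have h2 : v' ⟨j1.1, by omega⟩ = v' ⟨j2.1, by omega⟩ := by
      rw [hw j1, hw j2, hj]
    have h3 := hv h2
    rw [Fin.mk.injEq] at h3
    exact Fin.eq_of_val_eq h3
  have hv'w : ∀ (jn : ℕ) (hjn : jn < l - 1) (h2 : jn < l),
      v' ⟨jn, h2⟩ = iota a H e (w ⟨jn, hjn⟩) := fun jn hjn h2 => hw ⟨jn, hjn⟩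
  -- edges at inner positions are old edges
  have hinl : ∀ (j : ℕ) (hj : j < l - 1 - 1),
      ∃ qq : {x : H.E // x ≠ e}, ed' ⟨j, by omega⟩ = Sum.inl qq := by
    intro j hj
    rcases hq : ed' ⟨j, by omega⟩ with qq | i2
    · exact ⟨qq, rfl⟩
    · exfalso
      have hci := hc ⟨j, by omega⟩
      rw [hq] at hci
      obtain ⟨h₁, h₂, hp⟩ := hci
      have hmod : (j + 1) % l = j + 1 := Nat.mod_eq_of_lt (by omega)
      have hfr2 : ∀ pf, v' ⟨(j + 1) % l, pf⟩ ≠ fresh a H e := by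
        intro pf hx
        exact hnf ⟨(j + 1) % l, pf⟩ (show (j + 1) % l < l - 1 by omega) hx
      have hfr1 : v' ⟨j, by omega⟩ ≠ fresh a H e := hnf _ (show j < l - 1 by omega)
      rcases E2_cases a i2 with rfl | rfl
      · rcases Set.pair_eq_pair_iff.mp hp with ⟨u1, u2⟩ | ⟨u1, u2⟩
        · exact hfr2 _ ((att_inr0_2 a H e h₂).symm.trans u2).symm
        · exact hfr1 ((att_inr0_2 a H e h₂).symm.trans u2).symm
      · rcases Set.pair_eq_pair_iff.mp hp with ⟨u1, u2⟩ | ⟨u1, u2⟩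
        · exact hfr1 ((att_inr1_1 a H e h₁).symm.trans u1).symm
        · exact hfr2 _ ((att_inr1_1 a H e h₁).symm.trans u1).symm
  -- the two edges incident to the fresh node
  have hidxA : ((l - 1 - 1 : ℕ) + 1) % l = l - 1 := by
    rw [Nat.mod_eq_of_lt (by omega)]; omega
  have hidxB : ((l - 1 : ℕ) + 1) % l = 0 := by
    rw [Nat.sub_add_cancel (by omega), Nat.mod_self]
  have hA : ∃ i2 : Fin 2, ed' ⟨l - 1 - 1, by omega⟩ = Sum.inr i2 := by
    rcases hq : ed' ⟨l - 1 - 1, by omega⟩ with qq | i2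
    · exfalso
      have hci := hc ⟨l - 1 - 1, by omega⟩
      rw [hq] at hci
      obtain ⟨h₁, h₂, hp⟩ := hci
      have hfrA : v' ⟨((l - 1 - 1 : ℕ) + 1) % l, Nat.mod_lt _ hl⟩ = fresh a H e := by
        refine (congrArg v' (finmk _ _ hidxA)).trans hfr
      rcases Set.pair_eq_pair_iff.mp hp with ⟨u1, u2⟩ | ⟨u1, u2⟩
      · exact iota_ne_fresh a H e hta hH _
          (((att_inl a H e qq 2 h₂).symm.trans u2).trans hfrA)
      · exact iota_ne_fresh a H e hta hH _
          (((att_inl a H e qq 1 h₁).symm.trans u1).trans hfrA)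
    · exact ⟨i2, rfl⟩
  have hB : ∃ i2 : Fin 2, ed' ⟨l - 1, Nat.sub_lt hl Nat.one_pos⟩ = Sum.inr i2 := by
    rcases hq : ed' ⟨l - 1, Nat.sub_lt hl Nat.one_pos⟩ with qq | i2
    · exfalso
      have hci := hc ⟨l - 1, Nat.sub_lt hl Nat.one_pos⟩
      rw [hq] at hci
      obtain ⟨h₁, h₂, hp⟩ := hci
      rcases Set.pair_eq_pair_iff.mp hp with ⟨u1, u2⟩ | ⟨u1, u2⟩
      · exact iota_ne_fresh a H e hta hH _
          (((att_inl a H e qq 1 h₁).symm.trans u1).trans hfr)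
      · exact iota_ne_fresh a H e hta hH _
          (((att_inl a H e qq 2 h₂).symm.trans u2).trans hfr)
    · exact ⟨i2, rfl⟩
  obtain ⟨iA, hqA⟩ := hA
  obtain ⟨iB, hqB⟩ := hB
  have hiAB : iA ≠ iB := by
    intro hcontr
    have hne2 : (⟨l - 1 - 1, by omega⟩ : Fin l) = ⟨l - 1, Nat.sub_lt hl Nat.one_pos⟩ :=
      he (hqA.trans (hcontr ▸ hqB.symm))
    have h5 : l - 1 - 1 = l - 1 := congrArg Fin.val hne2
    omega
  have hfrA2 : v' (⟨((⟨l - 1 - 1, by omega⟩ : Fin l).1 + 1) % l,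
      Nat.mod_lt _ hl⟩ : Fin l) = fresh a H e :=
    (congrArg v' (finmk _ _ hidxA)).trans hfr
  have hfrBne : ∀ pf, v' ⟨((l - 1 : ℕ) + 1) % l, pf⟩ ≠ fresh a H e := by
    intro pf hx
    exact hnf ⟨((l - 1 : ℕ) + 1) % l, pf⟩ (show ((l - 1 : ℕ) + 1) % l < l - 1 by
      rw [hidxB]; omega) hx
  have hkey : ({H.att e 1 (memH a H hta hH 1 (by decide) e),
      H.att e 2 (memH a H hta hH 2 (by decide) e)} : Set H.V)
      = {w ⟨l - 1 - 1, by omega⟩, w ⟨0, by omega⟩} := by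
    have hcA := hc ⟨l - 1 - 1, by omega⟩
    have hcB := hc ⟨l - 1, Nat.sub_lt hl Nat.one_pos⟩
    have hwl2 : ∀ pf, v' ⟨l - 1 - 1, pf⟩ = iota a H e (w ⟨l - 1 - 1, by omega⟩) :=
      fun pf => hv'w _ (by omega) pf
    have hw0 : ∀ pf, v' ⟨((l - 1 : ℕ) + 1) % l, pf⟩ = iota a H e (w ⟨0, by omega⟩) := by
      intro pf
      refine (congrArg v' (finmk _ _ hidxB)).trans (hv'w 0 (by omega) (by omega))
    have hnfl2 : v' ⟨l - 1 - 1, by omega⟩ ≠ fresh a H e :=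
      hnf _ (show l - 1 - 1 < l - 1 by omega)
    rcases E2_cases (tc := tc) a iA with hA0 | hA0 <;> rcases E2_cases (tc := tc) a iB with hB0 | hB0 <;>
      rw [hA0] at hqA <;> rw [hB0] at hqB <;> rw [hqA] at hcA <;> rw [hqB] at hcB <;>
      obtain ⟨hA₁, hA₂, hpA⟩ := hcA <;> obtain ⟨hB₁, hB₂, hpB⟩ := hcB
    · exact absurd (hA0.trans hB0.symm) hiAB
    · -- iA = 0, iB = 1
      rcases Set.pair_eq_pair_iff.mp hpA with ⟨u1, u2⟩ | ⟨u1, u2⟩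
      · rcases Set.pair_eq_pair_iff.mp hpB with ⟨t1, t2⟩ | ⟨t1, t2⟩
        · have hx1 : H.att e 1 (memH a H hta hH 1 (by decide) e) = w ⟨l - 1 - 1, by omega⟩ :=
            iota_inj a H e hta hH
              (((att_inr0_1 a H e hta hH hA₁).symm.trans u1).trans (hwl2 _))
          have hx2 : H.att e 2 (memH a H hta hH 2 (by decide) e) = w ⟨0, by omega⟩ :=
            iota_inj a H e hta hH
              (((att_inr1_2 a H e hta hH hB₂).symm.trans t2).trans (hw0 _))
          exact Set.pair_eq_pair_iff.mpr (Or.inl ⟨hx1, hx2⟩)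
        · exact absurd ((att_inr1_1 a H e hB₁).symm.trans t1).symm (hfrBne _)
      · exact absurd (((att_inr0_1 a H e hta hH hA₁).symm.trans u1).trans hfrA2)
          (iota_ne_fresh a H e hta hH _)
    · -- iA = 1, iB = 0
      rcases Set.pair_eq_pair_iff.mp hpA with ⟨u1, u2⟩ | ⟨u1, u2⟩
      · exact absurd ((att_inr1_1 a H e hA₁).symm.trans u1).symm hnfl2
      · rcases Set.pair_eq_pair_iff.mp hpB with ⟨t1, t2⟩ | ⟨t1, t2⟩
        · exact absurd (((att_inr0_1 a H e hta hH hB₁).symm.trans t1).trans hfr)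
            (iota_ne_fresh a H e hta hH _)
        · have hx1 : H.att e 2 (memH a H hta hH 2 (by decide) e) = w ⟨l - 1 - 1, by omega⟩ :=
            iota_inj a H e hta hH
              (((att_inr1_2 a H e hta hH hA₂).symm.trans u2).trans (hwl2 _))
          have hx2 : H.att e 1 (memH a H hta hH 1 (by decide) e) = w ⟨0, by omega⟩ :=
            iota_inj a H e hta hH
              (((att_inr0_1 a H e hta hH hB₁).symm.trans t1).trans (hw0 _))
          exact Set.pair_eq_pair_iff.mpr (Or.inr ⟨hx2, hx1⟩)
    · exact absurd (hA0.trans hB0.symm) hiAB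
  choose qf hqf using hinl
  refine cycle_build H (m := l - 1) (by omega) w (fun j hj => (qf j hj).1) e hwinj ?_
    (fun j hj => (qf j hj).2) ?_ ?_
  · intro j1 j2 g1 g2 hj
    have h2 : ed' ⟨j1, by omega⟩ = ed' ⟨j2, by omega⟩ := by
      rw [hqf j1 g1, hqf j2 g2]
      exact congrArg Sum.inl (Subtype.ext hj)
    have h3 := he h2
    rw [Fin.mk.injEq] at h3
    exact h3
  · intro j hj
    have hci := hc ⟨j, by omega⟩
    rw [hqf j hj] at hci
    obtain ⟨h₁, h₂, hp⟩ := hci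
    refine ⟨h₁, h₂, ?_⟩
    refine (pair_image_iff (iota_inj a H e hta hH)).mp ?_
    have hB2 : v' (⟨((⟨j, by omega⟩ : Fin l).1 + 1) % l,
        Nat.mod_lt _ hl⟩ : Fin l)
        = iota a H e (w ⟨j + 1, by omega⟩) := by
      refine (congrArg v' (finmk _ _ (Nat.mod_eq_of_lt (show j + 1 < l by omega)))).trans
        (hv'w (j + 1) (by omega) (by omega))
    have hp2 : ({iota a H e (H.att (qf j hj).1 1 h₁), iota a H e (H.att (qf j hj).1 2 h₂)}
        : Set (replace H e (SG [a, a])).V)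
        = {iota a H e (w ⟨j, by omega⟩), iota a H e (w ⟨j + 1, by omega⟩)} :=
      hp.trans (Set.pair_eq_pair_iff.mpr (Or.inl ⟨hv'w j (by omega) (by omega), hB2⟩))
    exact hp2
  · exact ⟨memH a H hta hH 1 (by decide) e, memH a H hta hH 2 (by decide) e, hkey⟩

lemma hasCycle_iff (hta : tc a = ({1, 2} : Finset ℕ)) (hH : ∀ e' : H.E, H.lab e' = a) :
    HasUndirectedCycle H ↔ HasUndirectedCycle (replace H e (SG [a, a])) := by
  constructor
  · rintro ⟨l, hl, v, ed, hv, he, hc⟩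
    by_cases hmem : ∃ i, ed i = e
    · obtain ⟨i₀, hi₀⟩ := hmem
      obtain ⟨v2, ed2, hv2, he2, hc2, hval⟩ := rotate_cycle H hl v ed hv he hc (i₀.1 + 1)
      refine cycle_of_last a H e hta hH hl v2 ed2 hv2 he2 hc2 ?_
      rw [(hval ⟨l - 1, Nat.sub_lt hl Nat.one_pos⟩).2]
      have hidx : ((l - 1) + (i₀.1 + 1)) % l = i₀.1 := by
        have h2 : (l - 1) + (i₀.1 + 1) = l + i₀.1 := by omega
        rw [h2, Nat.add_mod_left, Nat.mod_eq_of_lt i₀.2]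
      have h4 : (⟨((⟨l - 1, Nat.sub_lt hl Nat.one_pos⟩ : Fin l).1 + (i₀.1 + 1)) % l,
          Nat.mod_lt _ hl⟩ : Fin l) = i₀ := Fin.eq_of_val_eq hidx
      rw [h4]
      exact hi₀
    · exact cycle_of_not_mem a H e hta hH hl v ed hv he hc (fun i h => hmem ⟨i, h⟩)
  · rintro ⟨l, hl, v', ed', hv, he, hc⟩
    by_cases hmem : ∃ i, v' i = fresh a H e
    · obtain ⟨i₀, hi₀⟩ := hmem
      obtain ⟨v2, ed2, hv2, he2, hc2, hval⟩ :=
        rotate_cycle (replace H e (SG [a, a])) hl v' ed' hv he hc (i₀.1 + 1)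
      refine cycle_back_fresh a H e hta hH hl v2 ed2 hv2 he2 hc2 ?_
      rw [(hval ⟨l - 1, Nat.sub_lt hl Nat.one_pos⟩).1]
      have hidx : ((l - 1) + (i₀.1 + 1)) % l = i₀.1 := by
        have h2 : (l - 1) + (i₀.1 + 1) = l + i₀.1 := by omega
        rw [h2, Nat.add_mod_left, Nat.mod_eq_of_lt i₀.2]
      have h4 : (⟨((⟨l - 1, Nat.sub_lt hl Nat.one_pos⟩ : Fin l).1 + (i₀.1 + 1)) % l,
          Nat.mod_lt _ hl⟩ : Fin l) = i₀ := Fin.eq_of_val_eq hidx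
      rw [h4]
      exact hi₀
    · exact cycle_back_nofresh a H e hta hH hl v' ed' hv he hc (fun i h => hmem ⟨i, h⟩)

lemma bad_iff (hta : tc a = ({1, 2} : Finset ℕ)) (hH : ∀ e' : H.E, H.lab e' = a) :
    Bad H ↔ Bad (replace H e (SG [a, a])) := by
  unfold Bad
  constructor
  · rintro (⟨v, hv⟩ | hcyc)
    · exact Or.inl ⟨iota a H e v, (badNode_iota a H e hta hH v).mpr hv⟩
    · exact Or.inr ((hasCycle_iff a H e hta hH).mp hcyc)
  · rintro (⟨v0, hv0⟩ | hcyc)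
    · rcases V_cases a H e hta hH v0 with ⟨v, rfl⟩ | rfl
      · exact Or.inl ⟨v, (badNode_iota a H e hta hH v).mp hv0⟩
      · exact absurd hv0 (fresh_not_bad a H e hta hH)
    · exact Or.inr ((hasCycle_iff a H e hta hH).mpr hcyc)

end StAux

end Stmt14Aux

/-- Replacing an `a`-labeled edge of an `a`-labeled hypergraph `H` by
`SG(aa)` (the production `π : a → SG(aa)`) preserves and reflects badness: `H` has a bad node
or an undirected cycle iff `H[e/SG(aa)]` does; equivalently, `H` is good iff `H[e/SG(aa)]`
is good. -/
theorem stmt_14 (C : Type) (tc : C → Finset ℕ) (a : C)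
    (hta : tc a = ({1, 2} : Finset ℕ))
    (H : Hypergraph C tc) (hH : ∀ e : H.E, H.lab e = a) (e : H.E) :
    (Bad H ↔ Bad (replace H e (SG [a, a]))) ∧
    (Good H ↔ Good (replace H e (SG [a, a]))) := by
  have hbad := StAux.bad_iff a H e hta hH
  exact ⟨hbad, not_congr hbad⟩

end HRGPaper
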